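/- The SINR targets γ̄ = (γ̄_1,...,γ̄_K) with γ̄_k > 0 are jointly achievable in the SISO interference channel under power constraints P_k^max if and only if ρ(G) < 1 and the componentwise-minimal power vector p = (I−G)^{-1}η satisfies p_k ≤ P_k^max for all k. -/

import Mathlib

open Matrix Finset Filter

section Aux

variable {K : ℕ}

private lemma pow_entry_nonneg (G : Matrix (Fin K) (Fin K) ℝ) (hG : ∀ i j, 0 ≤ G i j) :
    ∀ (n : ℕ) (i j : Fin K), 0 ≤ (G ^ n) i j := by
  intro n
  induction n with
  | zero =>
    intro i j
    by_cases h : i = j <;> simp [Matrix.one_apply, h]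
  | succ m ih =>
    intro i j
    rw [pow_succ, Matrix.mul_apply]
    exact Finset.sum_nonneg fun l _ => mul_nonneg (ih i l) (hG l j)

private lemma mulVec_entry (A : Matrix (Fin K) (Fin K) ℝ) (v : Fin K → ℝ) (k : Fin K) :
    (A *ᵥ v) k = ∑ j, A k j * v j := by
  simp [Matrix.mulVec, dotProduct]

private lemma abs_mulVec_le (A : Matrix (Fin K) (Fin K) ℝ) (hA : ∀ i j, 0 ≤ A i j)
    {v w : Fin K → ℝ} (h : ∀ j, |v j| ≤ w j) (k : Fin K) :
    |(A *ᵥ v) k| ≤ (A *ᵥ w) k := by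
  rw [mulVec_entry, mulVec_entry]
  calc |∑ j, A k j * v j| ≤ ∑ j, |A k j * v j| := Finset.abs_sum_le_sum_abs _ _
    _ ≤ ∑ j, A k j * w j := by
        refine Finset.sum_le_sum fun j _ => ?_
        rw [abs_mul, abs_of_nonneg (hA k j)]
        exact mul_le_mul_of_nonneg_left (h j) (hA k j)

private lemma mulVec_smul_weight (A : Matrix (Fin K) (Fin K) ℝ) (s : ℝ) (p : Fin K → ℝ)
    (k : Fin K) : (A *ᵥ fun j => s * p j) k = s * (A *ᵥ p) k := by
  rw [mulVec_entry, mulVec_entry, Finset.mul_sum]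
  exact Finset.sum_congr rfl fun j _ => by ring

private lemma weight_bound [Nonempty (Fin K)] (w p : Fin K → ℝ) (hw : ∀ k, 0 ≤ w k)
    (hp : ∀ k, 0 < p k) :
    ∃ s : ℝ, 0 ≤ s ∧ (∀ j, w j ≤ s * p j) ∧ ∃ k, w k = s * p k := by
  obtain ⟨k0, -, hk0⟩ :=
    Finset.exists_max_image Finset.univ (fun j => w j / p j) Finset.univ_nonempty
  refine ⟨w k0 / p k0, div_nonneg (hw k0) (hp k0).le, fun j => ?_,
    k0, (div_mul_cancel₀ _ (hp k0).ne').symm⟩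
  have h := hk0 j (Finset.mem_univ j)
  calc w j = w j / p j * p j := (div_mul_cancel₀ _ (hp j).ne').symm
    _ ≤ w k0 / p k0 * p j := mul_le_mul_of_nonneg_right h (hp j).le

/-- Key lemma: from a weighted row-sum contraction of a power of a nonnegative matrix,
the matrix `1 - G` is invertible and its inverse is entrywise nonnegative. -/
private lemma inv_nonneg_of_contract (hK : 0 < K) (G : Matrix (Fin K) (Fin K) ℝ)
    (hG : ∀ i j, 0 ≤ G i j) (n : ℕ) (c : ℝ) (hc0 : 0 ≤ c) (hc1 : c < 1)
    (p : Fin K → ℝ) (hp : ∀ k, 0 < p k) (hrow : ∀ k, ((G ^ n) *ᵥ p) k ≤ c * p k) :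
    IsUnit (1 - G).det ∧ ∀ i j, 0 ≤ (1 - G)⁻¹ i j := by
  haveI : Nonempty (Fin K) := Fin.pos_iff_nonempty.mp hK
  set T := G ^ n with hT
  have hTnn : ∀ (m : ℕ) (i j : Fin K), 0 ≤ (T ^ m) i j := by
    intro m
    rw [hT, ← pow_mul]
    exact pow_entry_nonneg G hG _
  have hT1 : ∀ i j, 0 ≤ T i j := fun i j => by simpa using hTnn 1 i j
  -- iterated contraction
  have hTm : ∀ (m : ℕ) (k : Fin K), ((T ^ m) *ᵥ p) k ≤ c ^ m * p k := by
    intro m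
    induction m with
    | zero => intro k; simp [Matrix.one_mulVec]
    | succ m ih =>
      intro k
      have hsplit : (T ^ (m + 1)) *ᵥ p = T *ᵥ ((T ^ m) *ᵥ p) := by
        rw [Matrix.mulVec_mulVec, ← pow_succ']
      rw [hsplit, mulVec_entry]
      calc ∑ j, T k j * ((T ^ m) *ᵥ p) j ≤ ∑ j, T k j * (c ^ m * p j) :=
            Finset.sum_le_sum fun j _ => mul_le_mul_of_nonneg_left (ih j) (hT1 k j)
        _ = c ^ m * (T *ᵥ p) k := by
            rw [mulVec_entry, Finset.mul_sum]
            exact Finset.sum_congr rfl fun j _ => by ring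
        _ ≤ c ^ m * (c * p k) := by
            refine mul_le_mul_of_nonneg_left ?_ (pow_nonneg hc0 m)
            simpa [hT] using hrow k
        _ = c ^ (m + 1) * p k := by ring
  -- (1 - T) has nonzero determinant
  have hdetT : (1 - T).det ≠ 0 := by
    intro hdet
    obtain ⟨v, hv0, hv⟩ := Matrix.exists_mulVec_eq_zero_iff.mpr hdet
    have hvT : T *ᵥ v = v := by
      rw [Matrix.sub_mulVec, Matrix.one_mulVec, sub_eq_zero] at hv
      exact hv.symm
    obtain ⟨s, hs0, hb, k0, hk0⟩ := weight_bound (fun k => |v k|) p (fun k => abs_nonneg _) hp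
    obtain ⟨j, hj⟩ := Function.ne_iff.mp hv0
    have hvj : 0 < |v j| := abs_pos.mpr hj
    have hspos : 0 < s := by nlinarith [hb j, hp j]
    have h1 : |v k0| ≤ s * (c * p k0) := by
      have h2 : |(T *ᵥ v) k0| ≤ (T *ᵥ fun l => s * p l) k0 :=
        abs_mulVec_le T hT1 (fun l => by simpa using hb l) k0
      rw [hvT, mulVec_smul_weight] at h2
      refine h2.trans ?_
      refine mul_le_mul_of_nonneg_left ?_ hs0
      simpa [hT] using hrow k0
    rw [hk0] at h1
    nlinarith [mul_pos hspos (hp k0)]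
  -- (1 - G) has nonzero determinant
  have hgeo : (1 - G) * (∑ i ∈ Finset.range n, G ^ i) = 1 - T := mul_neg_geom_sum G n
  have hdetG : (1 - G).det ≠ 0 := by
    intro h
    apply hdetT
    rw [← hgeo, Matrix.det_mul, h, zero_mul]
  have hu : IsUnit (1 - G).det := isUnit_iff_ne_zero.mpr hdetG
  refine ⟨hu, ?_⟩
  set N := (1 - G)⁻¹ with hNdef
  have hmul : (1 - G) * N = 1 := Matrix.mul_nonsing_inv _ hu
  have hNrec : N = 1 + G * N := by
    have h1 : N - G * N = 1 := by
      calc N - G * N = (1 - G) * N := by rw [Matrix.sub_mul, Matrix.one_mul]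
        _ = 1 := hmul
    exact sub_eq_iff_eq_add.mp h1
  have hiter : ∀ m : ℕ, N = (∑ i ∈ Finset.range m, G ^ i) + G ^ m * N := by
    intro m
    induction m with
    | zero => simp
    | succ m ih =>
      calc N = (∑ i ∈ Finset.range m, G ^ i) + G ^ m * N := ih
        _ = (∑ i ∈ Finset.range m, G ^ i) + G ^ m * (1 + G * N) := by rw [← hNrec]
        _ = (∑ i ∈ Finset.range (m + 1), G ^ i) + G ^ (m + 1) * N := by
            rw [Finset.sum_range_succ, mul_add, mul_one, ← mul_assoc, ← pow_succ, add_assoc]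
  intro i j
  obtain ⟨s, hs0, hb, -⟩ := weight_bound (fun l => |N l j|) p (fun l => abs_nonneg _) hp
  have hbound : ∀ m : ℕ, -(s * p i) * c ^ m ≤ N i j := by
    intro m
    have h1 := congrFun (congrFun (hiter (n * m)) i) j
    have h2 : N i j = (∑ i' ∈ Finset.range (n * m), G ^ i') i j + (G ^ (n * m) * N) i j := h1
    have h3 : 0 ≤ (∑ i' ∈ Finset.range (n * m), G ^ i') i j := by
      rw [Matrix.sum_apply]
      exact Finset.sum_nonneg fun l _ => pow_entry_nonneg G hG l i j
    have h4 : (G ^ (n * m) * N) i j = ((T ^ m) *ᵥ fun l => N l j) i := by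
      rw [hT, ← pow_mul, Matrix.mul_apply, mulVec_entry]
    have h5 : |((T ^ m) *ᵥ fun l => N l j) i| ≤ s * (c ^ m * p i) := by
      have h6 : |((T ^ m) *ᵥ fun l => N l j) i| ≤ ((T ^ m) *ᵥ fun l => s * p l) i :=
        abs_mulVec_le _ (hTnn m) (fun l => by simpa using hb l) i
      rw [mulVec_smul_weight] at h6
      refine h6.trans (mul_le_mul_of_nonneg_left ?_ hs0)
      exact hTm m i
    have h7 := (abs_le.mp h5).1
    rw [h4] at h2
    nlinarith [h2, h3, h7]
  have hlim : Tendsto (fun m : ℕ => -(s * p i) * c ^ m) atTop (nhds 0) := by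
    have h := (tendsto_pow_atTop_nhds_zero_of_lt_one hc0 hc1).const_mul (-(s * p i))
    simpa using h
  exact le_of_tendsto hlim (Eventually.of_forall hbound)

/-- Spectrum bound from a strict weighted row-sum contraction. -/
private lemma spectralRadius_lt_one_of_contract (hK : 0 < K) (G : Matrix (Fin K) (Fin K) ℝ)
    (hG : ∀ i j, 0 ≤ G i j) (r : ℝ) (hr1 : r < 1)
    (p : Fin K → ℝ) (hp : ∀ k, 0 < p k) (hrow : ∀ k, (G *ᵥ p) k ≤ r * p k) :
    spectralRadius ℂ (G.map ((↑) : ℝ → ℂ)) < 1 := by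
  haveI : Nonempty (Fin K) := Fin.pos_iff_nonempty.mp hK
  set A := G.map ((↑) : ℝ → ℂ) with hA
  have key : ∀ μ ∈ spectrum ℂ A, ‖μ‖ ≤ r := by
    intro μ hμ
    rw [spectrum.mem_iff] at hμ
    have hdet : (algebraMap ℂ (Matrix (Fin K) (Fin K) ℂ) μ - A).det = 0 := by
      by_contra h
      exact hμ ((Matrix.isUnit_iff_isUnit_det _).mpr (isUnit_iff_ne_zero.mpr h))
    obtain ⟨v, hv0, hv⟩ := Matrix.exists_mulVec_eq_zero_iff.mpr hdet
    have hev : A *ᵥ v = μ • v := by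
      rw [Matrix.sub_mulVec, Algebra.algebraMap_eq_smul_one, Matrix.smul_mulVec,
        Matrix.one_mulVec, sub_eq_zero] at hv
      exact hv.symm
    obtain ⟨s, hs0, hb, k0, hk0⟩ := weight_bound (fun k => ‖v k‖) p (fun k => norm_nonneg _) hp
    obtain ⟨j, hj⟩ := Function.ne_iff.mp hv0
    have hvj : (0:ℝ) < ‖v j‖ := norm_pos_iff.mpr hj
    have hspos : 0 < s := by nlinarith [hb j, hp j]
    have hcomp : ‖μ‖ * ‖v k0‖ ≤ s * (r * p k0) := by
      have h1 : ‖μ‖ * ‖v k0‖ = ‖(A *ᵥ v) k0‖ := by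
        rw [hev]
        simp [norm_smul]
      have h2 : (A *ᵥ v) k0 = ∑ j, (G k0 j : ℂ) * v j := by
        simp [hA, Matrix.mulVec, dotProduct, Matrix.map_apply]
      calc ‖μ‖ * ‖v k0‖ = ‖∑ j, (G k0 j : ℂ) * v j‖ := by rw [h1, h2]
        _ ≤ ∑ j, ‖(G k0 j : ℂ) * v j‖ := norm_sum_le _ _
        _ = ∑ j, G k0 j * ‖v j‖ := by
            refine Finset.sum_congr rfl fun j _ => ?_
            rw [norm_mul, Complex.norm_real, Real.norm_eq_abs, abs_of_nonneg (hG k0 j)]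
        _ ≤ ∑ j, G k0 j * (s * p j) :=
            Finset.sum_le_sum fun j _ => mul_le_mul_of_nonneg_left (hb j) (hG k0 j)
        _ = s * (G *ᵥ p) k0 := by
            rw [mulVec_entry, Finset.mul_sum]
            exact Finset.sum_congr rfl fun j _ => by ring
        _ ≤ s * (r * p k0) := mul_le_mul_of_nonneg_left (hrow k0) hs0
    rw [hk0] at hcomp
    nlinarith [mul_pos hspos (hp k0)]
  have hr0 : 0 ≤ r := by
    obtain k := Classical.arbitrary (Fin K)
    have h1 : 0 ≤ (G *ᵥ p) k := by
      rw [mulVec_entry]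
      exact Finset.sum_nonneg fun j _ => mul_nonneg (hG k j) (hp j).le
    nlinarith [hrow k, hp k]
  have hle : spectralRadius ℂ A ≤ ENNReal.ofReal r := by
    rw [spectralRadius]
    refine iSup₂_le fun μ hμ => ?_
    rw [← enorm_eq_nnnorm, ← ofReal_norm]
    exact ENNReal.ofReal_le_ofReal (key μ hμ)
  exact lt_of_le_of_lt hle (by rwa [ENNReal.ofReal_lt_one])

/-- Gelfand formula extraction: a small power exists. -/
private lemma exists_pow_row_sum_lt [Nonempty (Fin K)] (A : Matrix (Fin K) (Fin K) ℂ)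
    (h : spectralRadius ℂ A < 1) :
    ∃ n, 1 ≤ n ∧ ∀ k, ∑ j, ‖(A ^ n) k j‖ < 1 := by
  letI := Matrix.linftyOpNormedRing (n := Fin K) (α := ℂ)
  letI := Matrix.linftyOpNormedAlgebra (n := Fin K) (α := ℂ) (R := ℂ)
  haveI : CompleteSpace (Matrix (Fin K) (Fin K) ℂ) :=
    FiniteDimensional.complete ℂ (Matrix (Fin K) (Fin K) ℂ)
  have hgel := spectrum.pow_nnnorm_pow_one_div_tendsto_nhds_spectralRadius A
  have hev : ∀ᶠ n : ℕ in atTop, (‖A ^ n‖₊ : ENNReal) ^ (1/(n:ℝ)) < 1 :=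
    hgel.eventually_lt_const h
  obtain ⟨n, hn1, hnlt⟩ := ((eventually_ge_atTop 1).and hev).exists
  refine ⟨n, hn1, fun k => ?_⟩
  have hpos : (0:ℝ) < 1/(n:ℝ) := by positivity
  have hA : (‖A ^ n‖₊ : ENNReal) < 1 := by
    by_contra hc
    push_neg at hc
    exact absurd (ENNReal.one_le_rpow hc hpos) (not_le.mpr hnlt)
  have hA' : ‖A ^ n‖ < 1 := by
    rw [ENNReal.coe_lt_one_iff] at hA
    exact_mod_cast hA
  have hle : (∑ j, ‖(A ^ n) k j‖₊) ≤ ‖A ^ n‖₊ := by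
    rw [Matrix.linfty_opNNNorm_def]
    exact Finset.le_sup (f := fun i => ∑ j, ‖(A ^ n) i j‖₊) (Finset.mem_univ k)
  calc ∑ j, ‖(A ^ n) k j‖ = ((∑ j, ‖(A ^ n) k j‖₊ : NNReal) : ℝ) := by push_cast; rfl
    _ ≤ ‖A ^ n‖ := hle
    _ < 1 := hA'

end Aux

/-- SINR targets `γ̄ₖ > 0` are jointly achievable in the SISO interference
channel under power constraints `Pmax` if and only if `ρ(G) < 1` and the
componentwise-minimal power vector `p = (I - G)⁻¹ η` satisfies `pₖ ≤ Pmaxₖ`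
for all `k`. -/
theorem stmt_11 (K : ℕ) (g : Fin K → Fin K → ℝ) (σ2 Pmax γbar : Fin K → ℝ)
    (hg : ∀ k j, 0 ≤ g k j) (hgd : ∀ k, 0 < g k k) (hσ : ∀ k, 0 < σ2 k)
    (hP : ∀ k, 0 ≤ Pmax k) (hγ : ∀ k, 0 < γbar k)
    (G : Matrix (Fin K) (Fin K) ℝ)
    (hGdef : ∀ k j, G k j = if k = j then 0 else γbar k * g k j / g k k)
    (η : Fin K → ℝ) (hηdef : ∀ k, η k = γbar k * σ2 k / g k k) :
    (∃ p : Fin K → ℝ, (∀ k, 0 ≤ p k ∧ p k ≤ Pmax k) ∧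
        ∀ k, γbar k ≤ g k k * p k /
          (∑ j ∈ Finset.univ.erase k, g k j * p j + σ2 k)) ↔
    (spectralRadius ℂ (G.map ((↑) : ℝ → ℂ)) < 1 ∧
      ∀ k, ((1 - G)⁻¹ *ᵥ η) k ≤ Pmax k) := by
  rcases Nat.eq_zero_or_pos K with hK0 | hK
  · subst hK0
    constructor
    · intro _
      haveI : Subsingleton (Matrix (Fin 0) (Fin 0) ℂ) :=
        ⟨fun a b => by ext i; exact i.elim0⟩
      constructor
      · rw [spectralRadius, spectrum.of_subsingleton]
        simp
      · intro k; exact k.elim0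
    · intro _
      exact ⟨0, fun k => k.elim0, fun k => k.elim0⟩
  haveI : Nonempty (Fin K) := Fin.pos_iff_nonempty.mp hK
  -- basic positivity facts
  have hGnn : ∀ i j, 0 ≤ G i j := by
    intro i j
    rw [hGdef]
    split
    · exact le_refl 0
    · exact div_nonneg (mul_nonneg (hγ i).le (hg i j)) (hgd i).le
  have hη0 : ∀ k, 0 < η k := by
    intro k
    rw [hηdef]
    have := hγ k; have := hσ k; have := hgd k
    positivity
  -- row expansion of G *ᵥ p
  have hGrow : ∀ (p : Fin K → ℝ) (k : Fin K),
      (G *ᵥ p) k = ∑ j ∈ Finset.univ.erase k, γbar k * g k j / g k k * p j := by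
    intro p k
    rw [mulVec_entry, ← Finset.sum_erase_add _ _ (Finset.mem_univ k), hGdef k k,
      if_pos rfl, zero_mul, add_zero]
    refine Finset.sum_congr rfl fun j hj => ?_
    rw [hGdef, if_neg (Ne.symm (Finset.mem_erase.mp hj).1)]
  -- equivalence of SINR constraint with linear constraint
  have hiffk : ∀ (p : Fin K → ℝ), (∀ k, 0 ≤ p k) → ∀ k,
      (γbar k ≤ g k k * p k / (∑ j ∈ Finset.univ.erase k, g k j * p j + σ2 k) ↔
        (G *ᵥ p) k + η k ≤ p k) := by
    intro p hp0 k
    have hS0 : 0 ≤ ∑ j ∈ Finset.univ.erase k, g k j * p j :=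
      Finset.sum_nonneg fun j _ => mul_nonneg (hg k j) (hp0 j)
    have hD : 0 < ∑ j ∈ Finset.univ.erase k, g k j * p j + σ2 k := by linarith [hσ k]
    rw [le_div_iff₀ hD]
    have heq : (G *ᵥ p) k + η k =
        γbar k * (∑ j ∈ Finset.univ.erase k, g k j * p j + σ2 k) / g k k := by
      rw [hGrow p k, hηdef, mul_add, add_div, Finset.mul_sum, Finset.sum_div]
      congr 1
      exact Finset.sum_congr rfl fun j _ => by ring
    constructor
    · intro h
      rw [heq, div_le_iff₀ (hgd k)]
      linarith
    · intro h
      rw [heq, div_le_iff₀ (hgd k)] at h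
      linarith
  constructor
  · rintro ⟨p, hpb, hsinr⟩
    have hp0 : ∀ k, 0 ≤ p k := fun k => (hpb k).1
    have hppos : ∀ k, 0 < p k := by
      intro k
      by_contra hc
      push_neg at hc
      have hS0 : 0 ≤ ∑ j ∈ Finset.univ.erase k, g k j * p j :=
        Finset.sum_nonneg fun j _ => mul_nonneg (hg k j) (hp0 j)
      have hD : 0 < ∑ j ∈ Finset.univ.erase k, g k j * p j + σ2 k := by linarith [hσ k]
      have hnum : g k k * p k ≤ 0 := mul_nonpos_of_nonneg_of_nonpos (hgd k).le hc
      have hdiv : g k k * p k / (∑ j ∈ Finset.univ.erase k, g k j * p j + σ2 k) ≤ 0 :=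
        div_nonpos_iff.mpr (Or.inr ⟨hnum, hD.le⟩)
      linarith [hγ k, hsinr k]
    have hql : ∀ k, (G *ᵥ p) k + η k ≤ p k := fun k => (hiffk p hp0 k).mp (hsinr k)
    have hq0 : ∀ k, 0 ≤ (G *ᵥ p) k := by
      intro k
      rw [mulVec_entry]
      exact Finset.sum_nonneg fun j _ => mul_nonneg (hGnn k j) (hp0 j)
    set r := Finset.univ.sup' Finset.univ_nonempty (fun k => (G *ᵥ p) k / p k) with hr
    have hr1 : r < 1 := by
      rw [hr, Finset.sup'_lt_iff]
      intro k _
      rw [div_lt_one (hppos k)]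
      linarith [hη0 k, hql k]
    have hrow : ∀ k, (G *ᵥ p) k ≤ r * p k := by
      intro k
      have h1 : (G *ᵥ p) k / p k ≤ r :=
        Finset.le_sup' (fun k => (G *ᵥ p) k / p k) (Finset.mem_univ k)
      calc (G *ᵥ p) k = (G *ᵥ p) k / p k * p k := (div_mul_cancel₀ _ (hppos k).ne').symm
        _ ≤ r * p k := mul_le_mul_of_nonneg_right h1 (hppos k).le
    have hρ := spectralRadius_lt_one_of_contract hK G hGnn r hr1 p hppos hrow
    have hr0 : 0 ≤ r := by
      obtain k := Classical.arbitrary (Fin K)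
      nlinarith [hrow k, hq0 k, hppos k]
    obtain ⟨hu, hN⟩ := inv_nonneg_of_contract hK G hGnn 1 r hr0 hr1 p hppos
      (fun k => by simpa using hrow k)
    refine ⟨hρ, fun k => ?_⟩
    have hNG : (1 - G)⁻¹ * (1 - G) = 1 := Matrix.nonsing_inv_mul _ hu
    have hd : ∀ j, 0 ≤ ((1 - G) *ᵥ p) j - η j := by
      intro j
      have h1 : ((1 - G) *ᵥ p) j = p j - (G *ᵥ p) j := by
        rw [Matrix.sub_mulVec, Matrix.one_mulVec]
        simp
      rw [h1]
      linarith [hql j]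
    have hrepr : p - (1 - G)⁻¹ *ᵥ η = (1 - G)⁻¹ *ᵥ ((1 - G) *ᵥ p - η) := by
      rw [Matrix.mulVec_sub, Matrix.mulVec_mulVec, hNG, Matrix.one_mulVec]
    have h0 : 0 ≤ ((1 - G)⁻¹ *ᵥ ((1 - G) *ᵥ p - η)) k := by
      rw [mulVec_entry]
      refine Finset.sum_nonneg fun j _ => mul_nonneg (hN k j) ?_
      simpa using hd j
    have h1 := congrFun hrepr k
    have h2 : p k - ((1 - G)⁻¹ *ᵥ η) k = ((1 - G)⁻¹ *ᵥ ((1 - G) *ᵥ p - η)) k := h1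
    have h3 := (hpb k).2
    linarith
  · rintro ⟨hρ, hPle⟩
    obtain ⟨n, hn1, hrows⟩ := exists_pow_row_sum_lt (G.map ((↑) : ℝ → ℂ)) hρ
    have hmp : (G.map ((↑) : ℝ → ℂ)) ^ n = (G ^ n).map ((↑) : ℝ → ℂ) := by
      have h := map_pow (Complex.ofRealHom.mapMatrix (m := Fin K)) G n
      exact h.symm
    have hrowsR : ∀ k, ∑ j, (G ^ n) k j < 1 := by
      intro k
      have h := hrows k
      rw [hmp] at h
      calc ∑ j, (G ^ n) k j = ∑ j, ‖(((G ^ n) k j : ℝ) : ℂ)‖ := by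
            refine Finset.sum_congr rfl fun j _ => ?_
            rw [Complex.norm_real, Real.norm_eq_abs,
              abs_of_nonneg (pow_entry_nonneg G hGnn n k j)]
        _ < 1 := by simpa [Matrix.map_apply] using h
    set c := Finset.univ.sup' Finset.univ_nonempty (fun k => ∑ j, (G ^ n) k j) with hc
    have hc1 : c < 1 := by
      rw [hc, Finset.sup'_lt_iff]
      exact fun k _ => hrowsR k
    have hc0 : 0 ≤ c := by
      obtain k := Classical.arbitrary (Fin K)
      have h1 : (0:ℝ) ≤ ∑ j, (G ^ n) k j :=
        Finset.sum_nonneg fun j _ => pow_entry_nonneg G hGnn n k j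
      exact h1.trans (Finset.le_sup' (fun k => ∑ j, (G ^ n) k j) (Finset.mem_univ k))
    obtain ⟨hu, hN⟩ := inv_nonneg_of_contract hK G hGnn n c hc0 hc1 (fun _ => 1)
      (fun _ => one_pos) (by
        intro k
        rw [mulVec_entry]
        simp only [mul_one]
        exact Finset.le_sup' (fun k => ∑ j, (G ^ n) k j) (Finset.mem_univ k))
    set p := (1 - G)⁻¹ *ᵥ η with hp
    have hp0 : ∀ k, 0 ≤ p k := by
      intro k
      rw [hp, mulVec_entry]
      exact Finset.sum_nonneg fun j _ => mul_nonneg (hN k j) (hη0 j).le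
    have heq : ∀ k, (G *ᵥ p) k + η k = p k := by
      have h1 : (1 - G) *ᵥ p = η := by
        rw [hp, Matrix.mulVec_mulVec, Matrix.mul_nonsing_inv _ hu, Matrix.one_mulVec]
      intro k
      have h2 := congrFun h1 k
      have h3 : p k - (G *ᵥ p) k = η k := by
        rw [Matrix.sub_mulVec, Matrix.one_mulVec] at h2
        simpa using h2
      linarith
    refine ⟨p, fun k => ⟨hp0 k, hPle k⟩, fun k => ?_⟩
    exact (hiffk p hp0 k).mpr (le_of_eq (heq k))
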